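/- For all integers n and all odd integers m, F_{n+2m} - F_n = L_m * F_{n+m}, where F denotes the Fibonacci numbers and L the Lucas numbers. -/

import Mathlib

def lucasNat : ℕ → ℕ
  | 0 => 2
  | 1 => 1
  | (n + 2) => lucasNat (n + 1) + lucasNat n

noncomputable def F (n : ℤ) : ℤ :=
  if 0 ≤ n then Nat.fib n.toNat else (-1) ^ ((-n).toNat + 1) * Nat.fib (-n).toNat

noncomputable def L (n : ℤ) : ℤ :=
  if 0 ≤ n then lucasNat n.toNat else (-1) ^ (-n).toNat * lucasNat (-n).toNat

lemma F_natCast (k : ℕ) : F (k : ℤ) = Nat.fib k := by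
  simp [F]

lemma F_neg_natCast (k : ℕ) : F (-(k : ℤ)) = (-1) ^ (k + 1) * Nat.fib k := by
  rcases Nat.eq_zero_or_pos k with hk | hk
  · subst hk; simp [F]
  · have h : ¬ (0 ≤ -(k : ℤ)) := by omega
    simp [F, h]

lemma F_rec (k : ℤ) : F (k + 2) = F (k + 1) + F k := by
  rcases le_or_gt 0 k with hk | hk
  · obtain ⟨j, rfl⟩ := Int.eq_ofNat_of_zero_le hk
    have h2 : ((j : ℤ) + 2) = ((j + 2 : ℕ) : ℤ) := by push_cast; ring
    have h1 : ((j : ℤ) + 1) = ((j + 1 : ℕ) : ℤ) := by push_cast; ring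
    rw [h2, h1, F_natCast, F_natCast, F_natCast, Nat.fib_add_two]
    push_cast; ring
  · rcases eq_or_lt_of_le (by omega : k ≤ -1) with hk1 | hk1
    · subst hk1; norm_num [F]
    · rcases eq_or_lt_of_le (by omega : k ≤ -2) with hk2 | hk2
      · subst hk2; norm_num [F]
        decide
      · obtain ⟨j, hj⟩ := Int.eq_ofNat_of_zero_le (by omega : (0:ℤ) ≤ -k - 3)
        have e0 : k = -((j + 3 : ℕ) : ℤ) := by push_cast; omega
        have e1 : k + 1 = -((j + 2 : ℕ) : ℤ) := by push_cast; omega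
        have e2 : k + 2 = -((j + 1 : ℕ) : ℤ) := by push_cast; omega
        rw [e2, e1, e0, F_neg_natCast, F_neg_natCast, F_neg_natCast]
        have f1 : Nat.fib (j + 3) = Nat.fib (j + 1) + Nat.fib (j + 1 + 1) := by
          rw [show j + 3 = j + 1 + 2 by omega]; exact Nat.fib_add_two
        have f2 : Nat.fib (j + 2) = Nat.fib j + Nat.fib (j + 1) := Nat.fib_add_two
        have f3 : Nat.fib (j + 1 + 1) = Nat.fib (j + 2) := by norm_num
        push_cast [f1, f2]; ring

/-- Two-sided induction: a sequence satisfying the Fibonacci recurrence that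
vanishes at 0 and 1 vanishes everywhere. -/
lemma fib_like_zero (A : ℤ → ℤ) (h : ∀ k, A (k + 2) = A (k + 1) + A k)
    (h0 : A 0 = 0) (h1 : A 1 = 0) : ∀ n, A n = 0 := by
  have key : ∀ n : ℤ, A n = 0 ∧ A (n + 1) = 0 := by
    intro n
    induction n using Int.induction_on with
    | zero => exact ⟨h0, by simpa using h1⟩
    | succ k ih =>
        refine ⟨ih.2, ?_⟩
        have := h k
        rw [show ((k:ℤ) + 1) + 1 = (k:ℤ) + 2 by ring]
        rw [this, ih.1, ih.2]; ring
    | pred k ih =>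
        have key := h (-(k:ℤ) - 1)
        rw [show (-(k:ℤ) - 1) + 2 = -(k:ℤ) + 1 by ring,
          show (-(k:ℤ) - 1) + 1 = -(k:ℤ) by ring] at key
        constructor
        · have : A (-(k:ℤ) - 1) = 0 := by
            rw [ih.2, ih.1] at key; linarith
          exact this
        · rw [show -(k:ℤ) - 1 + 1 = -(k:ℤ) by ring]; exact ih.1
  exact fun n => (key n).1

lemma F_zero : F 0 = 0 := by simpa using F_natCast 0
lemma F_one : F 1 = 1 := by simpa using F_natCast 1
lemma F_two : F 2 = 1 := by simpa using F_natCast 2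

/-- Integer addition formula. -/
lemma F_add (a b : ℤ) : F (a + b) = F (a + 1) * F b + F a * F (b - 1) := by
  set A : ℤ → ℤ := fun a => F (a + b) - (F (a + 1) * F b + F a * F (b - 1)) with hA
  have key : ∀ a, A a = 0 := by
    apply fib_like_zero
    · intro k
      simp only [hA]
      have r1 := F_rec (k + b)
      have r2 := F_rec (k + 1)
      have r3 := F_rec k
      rw [show k + 2 + b = (k + b) + 2 by ring, show k + 1 + b = (k + b) + 1 by ring,
        show k + 2 + 1 = (k + 1) + 2 by ring, show k + 1 + 1 = k + 2 by ring] at *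
      rw [r1, r2, r3]; ring
    · simp only [hA]
      rw [zero_add, zero_add, F_zero, F_one]; ring
    · simp only [hA]
      have := F_rec (b - 1)
      rw [show b - 1 + 2 = 1 + b by ring, show b - 1 + 1 = b by ring] at this
      rw [this, show (1:ℤ) + 1 = 2 by norm_num, F_two, F_one]; ring
  have := key a
  simp only [hA] at this
  linarith

lemma F_neg_odd (m : ℤ) (hm : Odd m) : F (-m) = F m := by
  have hodd : Odd m.natAbs := Int.natAbs_odd.mpr hm
  rcases Int.natAbs_eq m with h | h
  · rw [h, F_neg_natCast, F_natCast, Even.neg_one_pow (Odd.add_one hodd)]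
    ring
  · rw [h, neg_neg, F_neg_natCast, F_natCast, Even.neg_one_pow (Odd.add_one hodd)]
    ring

lemma F_neg_even (m : ℤ) (hm : Even m) : F (-m) = -F m := by
  have heven : Even m.natAbs := Int.natAbs_even.mpr hm
  rcases Int.natAbs_eq m with h | h
  · rw [h, F_neg_natCast, F_natCast, Odd.neg_one_pow (Even.add_one heven)]
    ring
  · rw [h, neg_neg, F_neg_natCast, F_natCast, Odd.neg_one_pow (Even.add_one heven)]
    ring

lemma lucasNat_eq : ∀ k : ℕ, lucasNat (k + 1) = Nat.fib (k + 2) + Nat.fib k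
  | 0 => by decide
  | 1 => by decide
  | (k + 2) => by
      rw [show k + 2 + 1 = (k + 1 + 1) + 1 from rfl, lucasNat, lucasNat_eq (k + 1),
        lucasNat_eq k]
      have f1 : Nat.fib (k + 2 + 2) = Nat.fib (k + 2) + Nat.fib (k + 2 + 1) :=
        Nat.fib_add_two (n := k + 2)
      have f2 : Nat.fib (k + 1 + 2) = Nat.fib (k + 1) + Nat.fib (k + 1 + 1) :=
        Nat.fib_add_two (n := k + 1)
      have e1 : k + 2 + 1 = k + 1 + 2 := by omega
      have e2 : k + 1 + 1 = k + 2 := by omega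
      have f3 : Nat.fib (k + 2) = Nat.fib k + Nat.fib (k + 1) := Nat.fib_add_two
      rw [e1] at f1
      rw [e2] at f2
      omega

lemma L_eq (m : ℤ) : L m = F (m + 1) + F (m - 1) := by
  rcases lt_trichotomy m 0 with hm | hm | hm
  · obtain ⟨k, hk⟩ := Int.eq_ofNat_of_zero_le (by omega : (0:ℤ) ≤ -m - 1)
    have e0 : m = -((k + 1 : ℕ) : ℤ) := by push_cast; omega
    have h' : ¬ (0 ≤ m) := by omega
    have e1 : m + 1 = -((k : ℕ) : ℤ) := by push_cast; omega
    have e2 : m - 1 = -((k + 2 : ℕ) : ℤ) := by push_cast; omega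
    rw [e1, e2, F_neg_natCast, F_neg_natCast]
    simp only [L, h', if_false]
    have e3 : (-m).toNat = k + 1 := by omega
    rw [e3, lucasNat_eq]
    push_cast; ring
  · subst hm
    simp [L, lucasNat]
    norm_num [F]
  · obtain ⟨k, rfl⟩ := Int.eq_ofNat_of_zero_le hm.le
    have hk : 1 ≤ k := by exact_mod_cast hm
    obtain ⟨j, rfl⟩ := Nat.exists_eq_add_of_le hk
    have h' : (0:ℤ) ≤ (1 + j : ℕ) := by positivity
    simp only [L, h', if_true]
    rw [show ((1 + j : ℕ) : ℤ) + 1 = ((j + 2 : ℕ) : ℤ) by push_cast; ring,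
      show ((1 + j : ℕ) : ℤ) - 1 = ((j : ℕ) : ℤ) by push_cast; ring,
      F_natCast, F_natCast, Int.toNat_natCast, show 1 + j = j + 1 by ring, lucasNat_eq]
    push_cast; ring

theorem stmt0 (n m : ℤ) (hm : Odd m) : F (n + 2 * m) - F n = L m * F (n + m) := by
  have h1 : F (n + 2 * m) = F (n + m + 1) * F m + F (n + m) * F (m - 1) := by
    have := F_add (n + m) m
    rwa [show n + m + m = n + 2 * m by ring] at this
  have h2 : F n = F (n + m + 1) * F (-m) + F (n + m) * F (-m - 1) := by
    have := F_add (n + m) (-m)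
    rwa [show n + m + -m = n by ring] at this
  have h3 : F (-m) = F m := F_neg_odd m hm
  have h4 : F (-m - 1) = -F (m + 1) := by
    rw [show -m - 1 = -(m + 1) by ring]
    exact F_neg_even (m + 1) (by rcases hm with ⟨k, hk⟩; exact ⟨k + 1, by omega⟩)
  rw [L_eq, h1, h2, h3, h4]; ring
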